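/- Let G be a {2P3, P3+K3, 2K3, C4, C5, C6}-free graph containing an induced 2K2 on vertices {1,2,3,4} with edges 12 and 34. Let N_X denote the set of vertices outside {1,2,3,4} whose neighborhood within {1,2,3,4} equals X. Then every vertex of N_{1} ∪ N_{2} ∪ N_{12} is adjacent to every vertex of N_{3} ∪ N_{4} ∪ N_{34}. -/

import Mathlib

open scoped Classical

/-- Graph on `Fin n` with the given edge list. -/
def graphOfList (n : ℕ) (l : List (ℕ × ℕ)) : SimpleGraph (Fin n) :=
  SimpleGraph.fromRel (fun a b => ((a : ℕ), (b : ℕ)) ∈ l)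

/-- `G` contains no induced subgraph isomorphic to `H`. -/
def Free {α : Type*} {V : Type*} (H : SimpleGraph α) (G : SimpleGraph V) : Prop :=
  IsEmpty (H ↪g G)

def twoP3 : SimpleGraph (Fin 6) := graphOfList 6 [(0,1),(1,2),(3,4),(4,5)]
def p3PlusK3 : SimpleGraph (Fin 6) := graphOfList 6 [(0,1),(1,2),(3,4),(4,5),(3,5)]
def twoK3 : SimpleGraph (Fin 6) := graphOfList 6 [(0,1),(1,2),(0,2),(3,4),(4,5),(3,5)]
def cycle4 : SimpleGraph (Fin 4) := graphOfList 4 [(0,1),(1,2),(2,3),(3,0)]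
def cycle5 : SimpleGraph (Fin 5) := graphOfList 5 [(0,1),(1,2),(2,3),(3,4),(4,0)]
def cycle6 : SimpleGraph (Fin 6) := graphOfList 6 [(0,1),(1,2),(2,3),(3,4),(4,5),(5,0)]

/-- `G` is `{2P3, P3+K3, 2K3, C4, C5, C6}`-free. -/
def FFree {V : Type*} (G : SimpleGraph V) : Prop :=
  Free twoP3 G ∧ Free p3PlusK3 G ∧ Free twoK3 G ∧ Free cycle4 G ∧ Free cycle5 G ∧ Free cycle6 G

/-- `v1 v2 v3 v4` form an induced `2K2` with edges `v1v2` and `v3v4`. -/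
def Induced2K2 {V : Type*} (G : SimpleGraph V) (v1 v2 v3 v4 : V) : Prop :=
  v1 ≠ v2 ∧ v1 ≠ v3 ∧ v1 ≠ v4 ∧ v2 ≠ v3 ∧ v2 ≠ v4 ∧ v3 ≠ v4 ∧
  G.Adj v1 v2 ∧ G.Adj v3 v4 ∧ ¬ G.Adj v1 v3 ∧ ¬ G.Adj v1 v4 ∧ ¬ G.Adj v2 v3 ∧ ¬ G.Adj v2 v4

def pick6 {V : Type*} (a b c d e f : V) : Fin 6 → V
  | 0 => a | 1 => b | 2 => c | 3 => d | 4 => e | 5 => f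

section Aux
variable {V : Type*} {G : SimpleGraph V} {a b c d e f : V}

set_option maxHeartbeats 1000000 in
lemma noP3P3 (h : Free twoP3 G)
    (hac : a ≠ c) (hdf : d ≠ f)
    (had : a ≠ d) (hae : a ≠ e) (haf : a ≠ f) (hbd : b ≠ d) (hbe : b ≠ e) (hbf : b ≠ f)
    (hcd : c ≠ d) (hce : c ≠ e) (hcf : c ≠ f)
    (hab : G.Adj a b) (hbc : G.Adj b c) (hnac : ¬ G.Adj a c)
    (hde : G.Adj d e) (hef : G.Adj e f) (hndf : ¬ G.Adj d f)
    (hnad : ¬ G.Adj a d) (hnae : ¬ G.Adj a e) (hnaf : ¬ G.Adj a f)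
    (hnbd : ¬ G.Adj b d) (hnbe : ¬ G.Adj b e) (hnbf : ¬ G.Adj b f)
    (hncd : ¬ G.Adj c d) (hnce : ¬ G.Adj c e) (hncf : ¬ G.Adj c f) : False := by
  have hab' := hab.ne; have hbc' := hbc.ne; have hde' := hde.ne; have hef' := hef.ne
  have hba := hab.symm; have hcb := hbc.symm; have hed := hde.symm; have hfe := hef.symm
  have hnca : ¬ G.Adj c a := fun h' => hnac h'.symm
  have hnfd : ¬ G.Adj f d := fun h' => hndf h'.symm
  have hnda : ¬ G.Adj d a := fun h' => hnad h'.symm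
  have hnea : ¬ G.Adj e a := fun h' => hnae h'.symm
  have hnfa : ¬ G.Adj f a := fun h' => hnaf h'.symm
  have hndb : ¬ G.Adj d b := fun h' => hnbd h'.symm
  have hneb : ¬ G.Adj e b := fun h' => hnbe h'.symm
  have hnfb : ¬ G.Adj f b := fun h' => hnbf h'.symm
  have hndc : ¬ G.Adj d c := fun h' => hncd h'.symm
  have hnec : ¬ G.Adj e c := fun h' => hnce h'.symm
  have hnfc : ¬ G.Adj f c := fun h' => hncf h'.symm
  refine h.elim ⟨⟨pick6 a b c d e f, ?_⟩, ?_⟩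
  · intro u v huv
    fin_cases u <;> fin_cases v <;> simp_all [pick6, eq_comm]
  · intro u v
    fin_cases u <;> fin_cases v <;>
      simp_all [pick6, twoP3, graphOfList, SimpleGraph.fromRel_adj] <;> assumption

set_option maxHeartbeats 1000000 in
lemma noP3K3 (h : Free p3PlusK3 G)
    (hac : a ≠ c)
    (had : a ≠ d) (hae : a ≠ e) (haf : a ≠ f) (hbd : b ≠ d) (hbe : b ≠ e) (hbf : b ≠ f)
    (hcd : c ≠ d) (hce : c ≠ e) (hcf : c ≠ f)
    (hab : G.Adj a b) (hbc : G.Adj b c) (hnac : ¬ G.Adj a c)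
    (hde : G.Adj d e) (hef : G.Adj e f) (hdf : G.Adj d f)
    (hnad : ¬ G.Adj a d) (hnae : ¬ G.Adj a e) (hnaf : ¬ G.Adj a f)
    (hnbd : ¬ G.Adj b d) (hnbe : ¬ G.Adj b e) (hnbf : ¬ G.Adj b f)
    (hncd : ¬ G.Adj c d) (hnce : ¬ G.Adj c e) (hncf : ¬ G.Adj c f) : False := by
  have hab' := hab.ne; have hbc' := hbc.ne; have hde' := hde.ne; have hef' := hef.ne
  have hdf' := hdf.ne
  have hba := hab.symm; have hcb := hbc.symm; have hed := hde.symm; have hfe := hef.symm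
  have hfd := hdf.symm
  have hnca : ¬ G.Adj c a := fun h' => hnac h'.symm
  have hnda : ¬ G.Adj d a := fun h' => hnad h'.symm
  have hnea : ¬ G.Adj e a := fun h' => hnae h'.symm
  have hnfa : ¬ G.Adj f a := fun h' => hnaf h'.symm
  have hndb : ¬ G.Adj d b := fun h' => hnbd h'.symm
  have hneb : ¬ G.Adj e b := fun h' => hnbe h'.symm
  have hnfb : ¬ G.Adj f b := fun h' => hnbf h'.symm
  have hndc : ¬ G.Adj d c := fun h' => hncd h'.symm
  have hnec : ¬ G.Adj e c := fun h' => hnce h'.symm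
  have hnfc : ¬ G.Adj f c := fun h' => hncf h'.symm
  refine h.elim ⟨⟨pick6 a b c d e f, ?_⟩, ?_⟩
  · intro u v huv
    fin_cases u <;> fin_cases v <;> simp_all [pick6, eq_comm]
  · intro u v
    fin_cases u <;> fin_cases v <;>
      simp_all [pick6, p3PlusK3, graphOfList, SimpleGraph.fromRel_adj] <;> assumption

set_option maxHeartbeats 1000000 in
lemma noK3K3 (h : Free twoK3 G)
    (had : a ≠ d) (hae : a ≠ e) (haf : a ≠ f) (hbd : b ≠ d) (hbe : b ≠ e) (hbf : b ≠ f)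
    (hcd : c ≠ d) (hce : c ≠ e) (hcf : c ≠ f)
    (hab : G.Adj a b) (hbc : G.Adj b c) (hac : G.Adj a c)
    (hde : G.Adj d e) (hef : G.Adj e f) (hdf : G.Adj d f)
    (hnad : ¬ G.Adj a d) (hnae : ¬ G.Adj a e) (hnaf : ¬ G.Adj a f)
    (hnbd : ¬ G.Adj b d) (hnbe : ¬ G.Adj b e) (hnbf : ¬ G.Adj b f)
    (hncd : ¬ G.Adj c d) (hnce : ¬ G.Adj c e) (hncf : ¬ G.Adj c f) : False := by
  have hab' := hab.ne; have hbc' := hbc.ne; have hde' := hde.ne; have hef' := hef.ne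
  have hdf' := hdf.ne; have hac' := hac.ne
  have hba := hab.symm; have hcb := hbc.symm; have hed := hde.symm; have hfe := hef.symm
  have hfd := hdf.symm; have hca := hac.symm
  have hnda : ¬ G.Adj d a := fun h' => hnad h'.symm
  have hnea : ¬ G.Adj e a := fun h' => hnae h'.symm
  have hnfa : ¬ G.Adj f a := fun h' => hnaf h'.symm
  have hndb : ¬ G.Adj d b := fun h' => hnbd h'.symm
  have hneb : ¬ G.Adj e b := fun h' => hnbe h'.symm
  have hnfb : ¬ G.Adj f b := fun h' => hnbf h'.symm
  have hndc : ¬ G.Adj d c := fun h' => hncd h'.symm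
  have hnec : ¬ G.Adj e c := fun h' => hnce h'.symm
  have hnfc : ¬ G.Adj f c := fun h' => hncf h'.symm
  refine h.elim ⟨⟨pick6 a b c d e f, ?_⟩, ?_⟩
  · intro u v huv
    fin_cases u <;> fin_cases v <;> simp_all [pick6, eq_comm]
  · intro u v
    fin_cases u <;> fin_cases v <;>
      simp_all [pick6, twoK3, graphOfList, SimpleGraph.fromRel_adj] <;> assumption

end Aux

theorem n12_complete_to_n34 {V : Type*} (G : SimpleGraph V)
    (hfree : FFree G) (v1 v2 v3 v4 : V) (h2K2 : Induced2K2 G v1 v2 v3 v4) :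
    ∀ x y : V, x ∉ ({v1, v2, v3, v4} : Set V) → y ∉ ({v1, v2, v3, v4} : Set V) →
      (G.Adj x v1 ∨ G.Adj x v2) → ¬ G.Adj x v3 → ¬ G.Adj x v4 →
      (G.Adj y v3 ∨ G.Adj y v4) → ¬ G.Adj y v1 → ¬ G.Adj y v2 →
      G.Adj x y := by
  intro x y hxmem hymem hx12 hnx3 hnx4 hy34 hny1 hny2
  obtain ⟨h12ne, h13ne, h14ne, h23ne, h24ne, h34ne, h12, h34, hn13, hn14, hn23, hn24⟩ := h2K2
  by_contra hnxy
  -- distinctness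
  simp only [Set.mem_insert_iff, Set.mem_singleton_iff, not_or] at hxmem hymem
  obtain ⟨hx1ne, hx2ne, hx3ne, hx4ne⟩ := hxmem
  obtain ⟨hy1ne, hy2ne, hy3ne, hy4ne⟩ := hymem
  have hxyne : x ≠ y := by
    rintro rfl
    rcases hx12 with h | h
    · exact hny1 h
    · exact hny2 h
  have h1yne : v1 ≠ y := fun h => hny2 (h ▸ h12)
  have h2yne : v2 ≠ y := fun h => hny1 (h ▸ h12.symm)
  have h21 := h12.symm; have h43 := h34.symm
  -- cross non-adjacency in needed directions
  have hn1y : ¬ G.Adj v1 y := fun h => hny1 h.symm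
  have hn2y : ¬ G.Adj v2 y := fun h => hny2 h.symm
  have hn31 : ¬ G.Adj v3 v1 := fun h => hn13 h.symm
  have hn41 : ¬ G.Adj v4 v1 := fun h => hn14 h.symm
  have hn32 : ¬ G.Adj v3 v2 := fun h => hn23 h.symm
  have hn42 : ¬ G.Adj v4 v2 := fun h => hn24 h.symm
  have hn3x : ¬ G.Adj v3 x := fun h => hnx3 h.symm
  have hn4x : ¬ G.Adj v4 x := fun h => hnx4 h.symm
  have hnyx : ¬ G.Adj y x := fun h => hnxy h.symm
  have hny1' : ¬ G.Adj y v1 := hny1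
  have h31ne : v3 ≠ v1 := fun h => h13ne h.symm
  have h41ne : v4 ≠ v1 := fun h => h14ne h.symm
  have h32ne : v3 ≠ v2 := fun h => h23ne h.symm
  have h42ne : v4 ≠ v2 := fun h => h24ne h.symm
  have h43ne : v4 ≠ v3 := fun h => h34ne h.symm
  have hy1ne' : y ≠ v1 := hy1ne
  have h21ne : v2 ≠ v1 := fun h => h12ne h.symm
  have hyxne : y ≠ x := fun h => hxyne h.symm
  obtain ⟨hF1, hF2, hF3, _, _, _⟩ := hfree
  by_cases hx1 : G.Adj x v1 <;> by_cases hx2 : G.Adj x v2 <;>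
    by_cases hy3 : G.Adj y v3 <;> by_cases hy4 : G.Adj y v4
  -- x~v1,x~v2 ; y~v3,y~v4 : K3+K3
  · exact noK3K3 hF3 (a := x) (b := v1) (c := v2) (d := y) (e := v3) (f := v4)
      hxyne hx3ne hx4ne h1yne h13ne h14ne h2yne h23ne h24ne
      hx1 h12 hx2 hy3 h34 hy4 hnxy hnx3 hnx4 hn1y hn13 hn14 hn2y hn23 hn24
  · -- x K3, y~v3 only : P3 on (y,v3,v4), K3 on (x,v1,v2)
    exact noP3K3 hF2 (a := y) (b := v3) (c := v4) (d := x) (e := v1) (f := v2)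
      hy4ne hyxne hy1ne hy2ne (fun h => hx3ne h.symm) h31ne h32ne
      (fun h => hx4ne h.symm) h41ne h42ne
      hy3 h34 hy4 hx1 h12 hx2 hnyx hny1 hny2 hn3x hn31 hn32 hn4x hn41 hn42
  · -- x K3, y~v4 only : P3 (y,v4,v3), K3 (x,v1,v2)
    exact noP3K3 hF2 (a := y) (b := v4) (c := v3) (d := x) (e := v1) (f := v2)
      hy3ne hyxne hy1ne hy2ne (fun h => hx4ne h.symm) h41ne h42ne
      (fun h => hx3ne h.symm) h31ne h32ne
      hy4 h43 hy3 hx1 h12 hx2 hnyx hny1 hny2 hn4x hn41 hn42 hn3x hn31 hn32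
  · rcases hy34 with h | h; exact hy3 h; exact hy4 h
  -- x~v1 only
  · -- P3 (x,v1,v2), K3 (y,v3,v4)
    exact noP3K3 hF2 (a := x) (b := v1) (c := v2) (d := y) (e := v3) (f := v4)
      hx2ne hxyne hx3ne hx4ne h1yne h13ne h14ne h2yne h23ne h24ne
      hx1 h12 hx2 hy3 h34 hy4 hnxy hnx3 hnx4 hn1y hn13 hn14 hn2y hn23 hn24
  · exact noP3P3 hF1 (a := x) (b := v1) (c := v2) (d := y) (e := v3) (f := v4)
      hx2ne hy4ne hxyne hx3ne hx4ne h1yne h13ne h14ne h2yne h23ne h24ne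
      hx1 h12 hx2 hy3 h34 hy4 hnxy hnx3 hnx4 hn1y hn13 hn14 hn2y hn23 hn24
  · exact noP3P3 hF1 (a := x) (b := v1) (c := v2) (d := y) (e := v4) (f := v3)
      hx2ne hy3ne hxyne hx4ne hx3ne h1yne h14ne h13ne h2yne h24ne h23ne
      hx1 h12 hx2 hy4 h43 hy3 hnxy hnx4 hnx3 hn1y hn14 hn13 hn2y hn24 hn23
  · rcases hy34 with h | h; exact hy3 h; exact hy4 h
  -- x~v2 only
  · exact noP3K3 hF2 (a := x) (b := v2) (c := v1) (d := y) (e := v3) (f := v4)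
      hx1ne hxyne hx3ne hx4ne h2yne h23ne h24ne h1yne h13ne h14ne
      hx2 h21 hx1 hy3 h34 hy4 hnxy hnx3 hnx4 hn2y hn23 hn24 hn1y hn13 hn14
  · exact noP3P3 hF1 (a := x) (b := v2) (c := v1) (d := y) (e := v3) (f := v4)
      hx1ne hy4ne hxyne hx3ne hx4ne h2yne h23ne h24ne h1yne h13ne h14ne
      hx2 h21 hx1 hy3 h34 hy4 hnxy hnx3 hnx4 hn2y hn23 hn24 hn1y hn13 hn14
  · exact noP3P3 hF1 (a := x) (b := v2) (c := v1) (d := y) (e := v4) (f := v3)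
      hx1ne hy3ne hxyne hx4ne hx3ne h2yne h24ne h23ne h1yne h14ne h13ne
      hx2 h21 hx1 hy4 h43 hy3 hnxy hnx4 hnx3 hn2y hn24 hn23 hn1y hn14 hn13
  · rcases hy34 with h | h; exact hy3 h; exact hy4 h
  all_goals rcases hx12 with h | h; exact hx1 h; exact hx2 h
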